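/- Let a > 0, p > 2, q > 2, b, c be real numbers and t > 0, and define P(τ) := (b−2)p / ((a+p−2)t − (p−2)τ) + (c−2)q / ((a+q−2)t − (q−2)τ) for τ in [0, t). Then exp(−∫₀^ξ P(τ) dτ) tends, as ξ tends to t from the left, to (a/(a+p−2))^{(b−2)p/(p−2)} · (a/(a+q−2))^{(c−2)q/(q−2)}. -/

import Mathlib

open Real Filter Set intervalIntegral

lemma aux_integ (A B C : ℝ) (hB : 0 < B) (ξ : ℝ)
    (hpos : ∀ τ ∈ Set.uIcc (0:ℝ) ξ, 0 < A - B * τ) :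
    ∫ τ in (0:ℝ)..ξ, C / (A - B * τ)
      = (C / B) * (Real.log A - Real.log (A - B * ξ)) := by
  have hderiv : ∀ τ ∈ Set.uIcc (0:ℝ) ξ,
      HasDerivAt (fun τ => -(C / B) * Real.log (A - B * τ)) (C / (A - B * τ)) τ := by
    intro τ hτ
    have hg : HasDerivAt (fun τ : ℝ => A - B * τ) (-B) τ := by
      simpa using ((hasDerivAt_id τ).const_mul B).const_sub A
    have hlog := (hg.log (hpos τ hτ).ne')
    have := hlog.const_mul (-(C / B))
    refine this.congr_deriv ?_
    rw [neg_div, mul_neg, neg_mul, neg_neg, div_mul_div_comm, mul_comm C B, mul_div_mul_left _ _ hB.ne']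
  have hint : IntervalIntegrable (fun τ => C / (A - B * τ)) MeasureTheory.volume 0 ξ := by
    apply ContinuousOn.intervalIntegrable
    apply ContinuousOn.div continuousOn_const
    · exact (continuous_const.sub (continuous_const.mul continuous_id)).continuousOn
    · intro τ hτ; exact (hpos τ hτ).ne'
  rw [intervalIntegral.integral_eq_sub_of_hasDerivAt hderiv hint]
  simp only [mul_zero, sub_zero]
  ring

lemma exp_eq_rpow (A r x : ℝ) (hA : 0 < A) (hx : 0 < x) :
    Real.exp (-(r * (Real.log A - Real.log x))) = (x / A) ^ r := by
  rw [Real.rpow_def_of_pos (div_pos hx hA), Real.log_div hx.ne' hA.ne']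
  ring_nf

/-- As `ξ → t⁻`, `exp(−∫₀^ξ P(τ) dτ)` tends to
`(a/(a+p−2))^((b−2)p/(p−2)) · (a/(a+q−2))^((c−2)q/(q−2))`, where
`P(τ) = (b−2)p/((a+p−2)t − (p−2)τ) + (c−2)q/((a+q−2)t − (q−2)τ)`. -/
theorem stmt_10 (a p q b c t : ℝ) (ha : 0 < a) (hp : 2 < p) (hq : 2 < q) (ht : 0 < t) :
    Filter.Tendsto
      (fun ξ : ℝ => Real.exp (-(∫ τ in (0:ℝ)..ξ,
        ((b - 2) * p / ((a + p - 2) * t - (p - 2) * τ) +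
          (c - 2) * q / ((a + q - 2) * t - (q - 2) * τ)))))
      (nhdsWithin t (Set.Iio t))
      (nhds ((a / (a + p - 2)) ^ ((b - 2) * p / (p - 2)) *
        (a / (a + q - 2)) ^ ((c - 2) * q / (q - 2)))) := by
  have hp2 : (0:ℝ) < p - 2 := by linarith
  have hq2 : (0:ℝ) < q - 2 := by linarith
  have hA1 : 0 < (a + p - 2) * t := by nlinarith
  have hA2 : 0 < (a + q - 2) * t := by nlinarith
  have hposd : ∀ (B : ℝ), 0 < B → ∀ ξ < t, ∀ τ ∈ Set.uIcc (0:ℝ) ξ,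
      0 < (a + B - 2 + 2) * t - B * τ := by
    intro B hB ξ hξ τ hτ
    have hτt : τ ≤ t := le_trans hτ.2 (max_le ht.le hξ.le)
    nlinarith [mul_le_mul_of_nonneg_left hτt hB.le]
  -- function g
  set r1 := (b - 2) * p / (p - 2) with hr1
  set r2 := (c - 2) * q / (q - 2) with hr2
  have key : ∀ ξ < t,
      Real.exp (-(∫ τ in (0:ℝ)..ξ,
        ((b - 2) * p / ((a + p - 2) * t - (p - 2) * τ) +
          (c - 2) * q / ((a + q - 2) * t - (q - 2) * τ))))
      = (((a + p - 2) * t - (p - 2) * ξ) / ((a + p - 2) * t)) ^ r1 *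
        (((a + q - 2) * t - (q - 2) * ξ) / ((a + q - 2) * t)) ^ r2 := by
    intro ξ hξ
    have hpos1 : ∀ τ ∈ Set.uIcc (0:ℝ) ξ, 0 < (a + p - 2) * t - (p - 2) * τ := by
      intro τ hτ
      have := hposd (p - 2) hp2 ξ hξ τ hτ
      have e : a + (p - 2) - 2 + 2 = a + p - 2 := by ring
      linarith [e ▸ this]
    have hpos2 : ∀ τ ∈ Set.uIcc (0:ℝ) ξ, 0 < (a + q - 2) * t - (q - 2) * τ := by
      intro τ hτ
      have := hposd (q - 2) hq2 ξ hξ τ hτ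
      have e : a + (q - 2) - 2 + 2 = a + q - 2 := by ring
      linarith [e ▸ this]
    have hi1 : IntervalIntegrable
        (fun τ => (b - 2) * p / ((a + p - 2) * t - (p - 2) * τ)) MeasureTheory.volume 0 ξ := by
      apply ContinuousOn.intervalIntegrable
      apply ContinuousOn.div continuousOn_const
      · exact (continuous_const.sub (continuous_const.mul continuous_id)).continuousOn
      · intro τ hτ; exact (hpos1 τ hτ).ne'
    have hi2 : IntervalIntegrable
        (fun τ => (c - 2) * q / ((a + q - 2) * t - (q - 2) * τ)) MeasureTheory.volume 0 ξ := by
      apply ContinuousOn.intervalIntegrable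
      apply ContinuousOn.div continuousOn_const
      · exact (continuous_const.sub (continuous_const.mul continuous_id)).continuousOn
      · intro τ hτ; exact (hpos2 τ hτ).ne'
    rw [intervalIntegral.integral_add hi1 hi2,
      aux_integ _ _ _ hp2 ξ hpos1, aux_integ _ _ _ hq2 ξ hpos2, neg_add,
      Real.exp_add,
      exp_eq_rpow _ _ _ hA1 (hpos1 ξ Set.right_mem_uIcc),
      exp_eq_rpow _ _ _ hA2 (hpos2 ξ Set.right_mem_uIcc), hr1, hr2]
  have hb1 : 0 < a / (a + p - 2) := div_pos ha (by linarith)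
  have hb2 : 0 < a / (a + q - 2) := div_pos ha (by linarith)
  have hlim : Filter.Tendsto
      (fun ξ : ℝ => (((a + p - 2) * t - (p - 2) * ξ) / ((a + p - 2) * t)) ^ r1 *
        (((a + q - 2) * t - (q - 2) * ξ) / ((a + q - 2) * t)) ^ r2)
      (nhdsWithin t (Set.Iio t))
      (nhds ((a / (a + p - 2)) ^ r1 * (a / (a + q - 2)) ^ r2)) := by
    have c1 : Filter.Tendsto (fun ξ : ℝ => ((a + p - 2) * t - (p - 2) * ξ) / ((a + p - 2) * t))
        (nhdsWithin t (Set.Iio t)) (nhds (a / (a + p - 2))) := by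
      have : ((a + p - 2) * t - (p - 2) * t) / ((a + p - 2) * t) = a / (a + p - 2) := by
        rw [show (a + p - 2) * t - (p - 2) * t = a * t by ring]
        rw [mul_comm (a + p - 2) t, mul_comm a t, mul_div_mul_left _ _ ht.ne']
      rw [← this]
      exact (Filter.Tendsto.div_const (tendsto_const_nhds.sub
        (Filter.tendsto_id.const_mul _)) _).mono_left nhdsWithin_le_nhds
    have c2 : Filter.Tendsto (fun ξ : ℝ => ((a + q - 2) * t - (q - 2) * ξ) / ((a + q - 2) * t))
        (nhdsWithin t (Set.Iio t)) (nhds (a / (a + q - 2))) := by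
      have : ((a + q - 2) * t - (q - 2) * t) / ((a + q - 2) * t) = a / (a + q - 2) := by
        rw [show (a + q - 2) * t - (q - 2) * t = a * t by ring]
        rw [mul_comm (a + q - 2) t, mul_comm a t, mul_div_mul_left _ _ ht.ne']
      rw [← this]
      exact (Filter.Tendsto.div_const (tendsto_const_nhds.sub
        (Filter.tendsto_id.const_mul _)) _).mono_left nhdsWithin_le_nhds
    have cr1 : ContinuousAt (fun x : ℝ => x ^ r1) (a / (a + p - 2)) :=
      Real.continuousAt_rpow_const _ _ (Or.inl hb1.ne')
    have cr2 : ContinuousAt (fun x : ℝ => x ^ r2) (a / (a + q - 2)) :=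
      Real.continuousAt_rpow_const _ _ (Or.inl hb2.ne')
    exact (cr1.tendsto.comp c1).mul (cr2.tendsto.comp c2)
  refine hlim.congr' ?_
  filter_upwards [self_mem_nhdsWithin] with ξ hξ
  exact (key ξ hξ).symm
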